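/- arXiv:2209.01184 — 3 statements merged into one kernel-verified Lean document; each statement's English description precedes it below -/
import Mathlib

section
/- Let α ∈ (1,2), c ∈ (0,1), a = cos(απ), and define β(a,c) = (1/π)·arccos( (c²(1−a²) − (1+ac)²) / (c²(1−a²) + (1+ac)²) ). Then β(a,c) ∈ (α−1, 1). -/
theorem stmt_12 (α c : ℝ) (hα : 1 < α) (hα2 : α < 2) (hc0 : 0 < c) (hc1 : c < 1) :
    α - 1 <
        (1 / Real.pi) * Real.arccos
          ((c ^ 2 * (1 - Real.cos (α * Real.pi) ^ 2) - (1 + Real.cos (α * Real.pi) * c) ^ 2) /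
            (c ^ 2 * (1 - Real.cos (α * Real.pi) ^ 2) + (1 + Real.cos (α * Real.pi) * c) ^ 2)) ∧
      (1 / Real.pi) * Real.arccos
          ((c ^ 2 * (1 - Real.cos (α * Real.pi) ^ 2) - (1 + Real.cos (α * Real.pi) * c) ^ 2) /
            (c ^ 2 * (1 - Real.cos (α * Real.pi) ^ 2) + (1 + Real.cos (α * Real.pi) * c) ^ 2)) <
        1 := by
  have hπ : (0:ℝ) < Real.pi := Real.pi_pos
  set a := Real.cos (α * Real.pi) with ha_def
  set t := (α - 1) * Real.pi with ht_def
  have ht0 : 0 < t := mul_pos (by linarith) hπ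
  have htπ : t < Real.pi := by nlinarith
  have hcos : Real.cos t = -a := by
    have : α * Real.pi = t + Real.pi := by ring
    rw [ha_def, this, Real.cos_add_pi, neg_neg]
  have hct1 : Real.cos t < 1 := by
    have := Real.strictAntiOn_cos (by constructor <;> [rfl; exact hπ.le])
      (by constructor <;> [exact ht0.le; exact htπ.le]) ht0
    simpa using this
  have hct2 : -1 < Real.cos t := by
    have := Real.strictAntiOn_cos (by constructor <;> [exact ht0.le; exact htπ.le])
      (by constructor <;> [exact hπ.le; rfl]) htπ
    simpa using this
  have ha1 : -1 < a := by rw [hcos] at hct1; linarith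
  have ha2 : a < 1 := by rw [hcos] at hct2; linarith
  have hac : 0 < 1 + a * c := by nlinarith
  have ha2' : 0 < 1 - a ^ 2 := by nlinarith
  set N := c ^ 2 * (1 - a ^ 2) - (1 + a * c) ^ 2 with hN
  set D := c ^ 2 * (1 - a ^ 2) + (1 + a * c) ^ 2 with hD
  have hDpos : 0 < D := by positivity
  set x := N / D with hx
  have hx1 : -1 < x := by
    rw [hx, lt_div_iff₀ hDpos]
    nlinarith [mul_pos (pow_pos hc0 2) ha2']
  have hx2 : x < Real.cos t := by
    rw [hcos, hx, div_lt_iff₀ hDpos]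
    nlinarith [mul_pos (mul_pos (by linarith : (0:ℝ) < 1 - a) (by linarith : (0:ℝ) < 1 - c))
      (by nlinarith : (0:ℝ) < 1 + c + 2 * a * c)]
  have hxle : x ≤ 1 := by rw [hcos] at hx2; nlinarith
  have hlow : t < Real.arccos x := by
    have := Real.strictAntiOn_arccos ⟨hx1.le, hxle⟩ ⟨by linarith, hct1.le⟩ hx2
    rwa [Real.arccos_cos ht0.le htπ.le] at this
  have hhigh : Real.arccos x < Real.pi := by
    have := Real.strictAntiOn_arccos (by constructor <;> norm_num) ⟨hx1.le, hxle⟩ hx1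
    rwa [Real.arccos_neg_one] at this
  constructor
  · rw [one_div, inv_mul_eq_div, lt_div_iff₀ hπ]
    calc (α - 1) * Real.pi = t := rfl
      _ < Real.arccos x := hlow
  · rw [one_div, inv_mul_eq_div, div_lt_one hπ]
    exact hhigh
end

section
/- Let α ∈ (1,2), c ∈ (0,1), a = cos(απ), and β(a,c) as defined via arccos. Define h₊(γ) = c·sin(−απ) − sin(γπ) − c·sin((γ−α)π). Then h₊(0) = 0, h₊(γ) < 0 for γ ∈ (α−1, β(a,c)), and h₊(γ) ≥ 0 for γ ∈ [β(a,c), 1). -/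
theorem stmt_13 (α c : ℝ) (hα : 1 < α) (hα2 : α < 2) (hc0 : 0 < c) (hc1 : c < 1)
    (a β : ℝ) (ha : a = Real.cos (α * Real.pi))
    (hβ : β = (1 / Real.pi) * Real.arccos
      ((c ^ 2 * (1 - a ^ 2) - (1 + a * c) ^ 2) / (c ^ 2 * (1 - a ^ 2) + (1 + a * c) ^ 2)))
    (hp : ℝ → ℝ)
    (hdef : ∀ γ, hp γ = c * Real.sin (-α * Real.pi) - Real.sin (γ * Real.pi) -
      c * Real.sin ((γ - α) * Real.pi)) :
    hp 0 = 0 ∧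
      (∀ γ, α - 1 < γ → γ < β → hp γ < 0) ∧
      (∀ γ, β ≤ γ → γ < 1 → 0 ≤ hp γ) := by
  have hπ : (0:ℝ) < Real.pi := Real.pi_pos
  -- sin(απ) < 0
  have hs : Real.sin (α * Real.pi) < 0 := by
    have h1 : 0 < Real.sin ((α - 1) * Real.pi) :=
      Real.sin_pos_of_pos_of_lt_pi (by nlinarith) (by nlinarith)
    have h2 : α * Real.pi = (α - 1) * Real.pi + Real.pi := by ring
    rw [h2, Real.sin_add_pi]; linarith
  have hpyth : Real.sin (α * Real.pi) ^ 2 + Real.cos (α * Real.pi) ^ 2 = 1 :=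
    Real.sin_sq_add_cos_sq _
  have ha1 : -1 ≤ a := ha ▸ Real.neg_one_le_cos _
  have hB : 0 < 1 + a * c := by nlinarith
  have hAp : 0 < -(c * Real.sin (α * Real.pi)) := by nlinarith
  have hnum : c ^ 2 * (1 - a ^ 2) = (c * Real.sin (α * Real.pi)) ^ 2 := by
    rw [ha]; nlinarith
  have hD : 0 < c ^ 2 * (1 - a ^ 2) + (1 + a * c) ^ 2 := by nlinarith
  set x : ℝ := (c ^ 2 * (1 - a ^ 2) - (1 + a * c) ^ 2) / (c ^ 2 * (1 - a ^ 2) + (1 + a * c) ^ 2)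
    with hxdef
  have hx1 : x ≤ 1 := by
    rw [hxdef, div_le_one hD]; nlinarith
  have hxm1 : -1 < x := by
    rw [hxdef, lt_div_iff₀ hD]; nlinarith
  have hβπ : β * Real.pi = Real.arccos x := by
    rw [hβ]; field_simp
  have hcosβ : Real.cos (β * Real.pi) = x := by
    rw [hβπ]; exact Real.cos_arccos (le_of_lt hxm1) hx1
  have hβ0 : 0 ≤ β := by
    rw [hβ]
    have := Real.arccos_nonneg x
    positivity
  have hβle1 : β * Real.pi ≤ Real.pi := hβπ ▸ Real.arccos_le_pi x
  have hβlt1 : β < 1 := by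
    rcases lt_or_eq_of_le hβle1 with h | h
    · by_contra hcon
      push_neg at hcon
      nlinarith
    · exfalso
      have : Real.cos (β * Real.pi) = -1 := by rw [h, Real.cos_pi]
      rw [hcosβ] at this; linarith
  -- key rewriting
  have key : ∀ γ, hp γ = (-(c * Real.sin (α * Real.pi))) * (1 - Real.cos (γ * Real.pi))
      - (1 + a * c) * Real.sin (γ * Real.pi) := by
    intro γ
    rw [hdef]
    have h2 : (γ - α) * Real.pi = γ * Real.pi - α * Real.pi := by ring
    have h3 : -α * Real.pi = -(α * Real.pi) := by ring
    rw [h2, h3, Real.sin_neg, Real.sin_sub, ha]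
    ring
  -- the cos(βπ) identity
  have hND : (c ^ 2 * (1 - a ^ 2) + (1 + a * c) ^ 2) * Real.cos (β * Real.pi)
      = c ^ 2 * (1 - a ^ 2) - (1 + a * c) ^ 2 := by
    rw [hcosβ, hxdef]; exact mul_div_cancel₀ _ hD.ne'
  refine ⟨by simp [key], ?_, ?_⟩
  · -- negative part
    intro γ h1 h2
    have hγ0 : 0 < γ := by linarith
    have hγ1 : γ < 1 := by linarith
    have hθβ : γ * Real.pi < β * Real.pi := mul_lt_mul_of_pos_right h2 hπ
    have hθ0 : 0 < γ * Real.pi := by positivity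
    have hθπ : γ * Real.pi < Real.pi := by
      have := mul_lt_mul_of_pos_right hγ1 hπ
      simpa using this
    have hcos : Real.cos (β * Real.pi) < Real.cos (γ * Real.pi) :=
      Real.strictAntiOn_cos ⟨le_of_lt hθ0, by linarith⟩
        ⟨by positivity, hβle1⟩ hθβ
    have hcos1 : Real.cos (γ * Real.pi) < 1 := by
      have := Real.strictAntiOn_cos (Set.left_mem_Icc.mpr (le_of_lt hπ))
        ⟨le_of_lt hθ0, le_of_lt hθπ⟩ hθ0
      simpa using this
    have hsin : 0 < Real.sin (γ * Real.pi) := Real.sin_pos_of_pos_of_lt_pi hθ0 hθπ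
    have hsin2 : Real.sin (γ * Real.pi) ^ 2 = 1 - Real.cos (γ * Real.pi) ^ 2 := by
      have := Real.sin_sq_add_cos_sq (γ * Real.pi)
      linarith
    have hsq : ((1 + a * c) * Real.sin (γ * Real.pi)) ^ 2
        - ((-(c * Real.sin (α * Real.pi))) * (1 - Real.cos (γ * Real.pi))) ^ 2
        = (1 - Real.cos (γ * Real.pi)) * ((c ^ 2 * (1 - a ^ 2) + (1 + a * c) ^ 2)
          * (Real.cos (γ * Real.pi) - Real.cos (β * Real.pi))) := by
      linear_combination ((1 + a * c) ^ 2) * hsin2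
        + (1 - Real.cos (γ * Real.pi)) * hND
        + (1 - Real.cos (γ * Real.pi)) ^ 2 * hnum
    have hpos : 0 < ((1 + a * c) * Real.sin (γ * Real.pi)) ^ 2
        - ((-(c * Real.sin (α * Real.pi))) * (1 - Real.cos (γ * Real.pi))) ^ 2 := by
      rw [hsq]
      apply mul_pos (by linarith) (mul_pos hD (by linarith))
    have hlt : (-(c * Real.sin (α * Real.pi))) * (1 - Real.cos (γ * Real.pi))
        < (1 + a * c) * Real.sin (γ * Real.pi) :=
      lt_of_pow_lt_pow_left₀ 2 (by positivity) (by linarith)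
    rw [key γ]; linarith
  · -- nonnegative part
    intro γ h1 h2
    have hθ0 : 0 ≤ γ * Real.pi := by
      have : 0 ≤ γ := le_trans hβ0 h1
      positivity
    have hθπ : γ * Real.pi ≤ Real.pi := by
      have := mul_lt_mul_of_pos_right h2 hπ
      simpa using this.le
    have hθβ : β * Real.pi ≤ γ * Real.pi := mul_le_mul_of_nonneg_right h1 hπ.le
    have hcos : Real.cos (γ * Real.pi) ≤ Real.cos (β * Real.pi) :=
      Real.cos_le_cos_of_nonneg_of_le_pi (by positivity) hθπ hθβ
    have hcos1 : Real.cos (γ * Real.pi) ≤ 1 := Real.cos_le_one _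
    have hsin : 0 ≤ Real.sin (γ * Real.pi) :=
      Real.sin_nonneg_of_nonneg_of_le_pi hθ0 hθπ
    have hsin2 : Real.sin (γ * Real.pi) ^ 2 = 1 - Real.cos (γ * Real.pi) ^ 2 := by
      have := Real.sin_sq_add_cos_sq (γ * Real.pi)
      linarith
    have hsq : ((1 + a * c) * Real.sin (γ * Real.pi)) ^ 2
        - ((-(c * Real.sin (α * Real.pi))) * (1 - Real.cos (γ * Real.pi))) ^ 2
        = (1 - Real.cos (γ * Real.pi)) * ((c ^ 2 * (1 - a ^ 2) + (1 + a * c) ^ 2)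
          * (Real.cos (γ * Real.pi) - Real.cos (β * Real.pi))) := by
      linear_combination ((1 + a * c) ^ 2) * hsin2
        + (1 - Real.cos (γ * Real.pi)) * hND
        + (1 - Real.cos (γ * Real.pi)) ^ 2 * hnum
    have hnegdiff : ((1 + a * c) * Real.sin (γ * Real.pi)) ^ 2
        ≤ ((-(c * Real.sin (α * Real.pi))) * (1 - Real.cos (γ * Real.pi))) ^ 2 := by
      have h4 : (c ^ 2 * (1 - a ^ 2) + (1 + a * c) ^ 2)
          * (Real.cos (γ * Real.pi) - Real.cos (β * Real.pi)) ≤ 0 :=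
        mul_nonpos_of_nonneg_of_nonpos hD.le (by linarith)
      have h5 : (1 - Real.cos (γ * Real.pi)) * ((c ^ 2 * (1 - a ^ 2) + (1 + a * c) ^ 2)
          * (Real.cos (γ * Real.pi) - Real.cos (β * Real.pi))) ≤ 0 :=
        mul_nonpos_of_nonneg_of_nonpos (by linarith) h4
      linarith [hsq]
    have hle : (1 + a * c) * Real.sin (γ * Real.pi)
        ≤ (-(c * Real.sin (α * Real.pi))) * (1 - Real.cos (γ * Real.pi)) :=
      le_of_pow_le_pow_left₀ two_ne_zero
        (mul_nonneg hAp.le (by linarith)) hnegdiff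
    rw [key γ]; linarith
end

section
/- Let α ∈ (0,2)∖{1}, and let D₋, D₊, I₋, I₊ be linear endomorphisms of a vector space V satisfying D₋∘I₋ = id, D₊∘I₊ = id, D₋∘I₊ + D₊∘I₋ = 2cos(απ)·id, and all four operators pairwise commute. Let M₋, M₊ ∈ ℝ not both zero, set M = M₋² + M₊² + 2M₋M₊cos(απ) and K± = M±/M. Then (K₋I₋ + K₊I₊)∘(M₋D₋ + M₊D₊) = id and (M₋D₋ + M₊D₊)∘(K₋I₋ + K₊I₊) = id. -/
theorem stmt_15 (α : ℝ) (hα0 : 0 < α) (hα2 : α < 2) (hα1 : α ≠ 1)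
    (V : Type*) [AddCommGroup V] [Module ℝ V]
    (Dm Dp Im Ip : V →ₗ[ℝ] V)
    (h1 : Dm ∘ₗ Im = LinearMap.id)
    (h2 : Dp ∘ₗ Ip = LinearMap.id)
    (h3 : Dm ∘ₗ Ip + Dp ∘ₗ Im = (2 * Real.cos (α * Real.pi)) • LinearMap.id)
    (hc1 : Dm ∘ₗ Dp = Dp ∘ₗ Dm) (hc2 : Dm ∘ₗ Im = Im ∘ₗ Dm)
    (hc3 : Dm ∘ₗ Ip = Ip ∘ₗ Dm) (hc4 : Dp ∘ₗ Im = Im ∘ₗ Dp)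
    (hc5 : Dp ∘ₗ Ip = Ip ∘ₗ Dp) (hc6 : Im ∘ₗ Ip = Ip ∘ₗ Im)
    (Mm Mp : ℝ) (hM : ¬(Mm = 0 ∧ Mp = 0))
    (M Km Kp : ℝ)
    (hMdef : M = Mm ^ 2 + Mp ^ 2 + 2 * Mm * Mp * Real.cos (α * Real.pi))
    (hKm : Km = Mm / M) (hKp : Kp = Mp / M) :
    (Km • Im + Kp • Ip) ∘ₗ (Mm • Dm + Mp • Dp) = LinearMap.id ∧
      (Mm • Dm + Mp • Dp) ∘ₗ (Km • Im + Kp • Ip) = LinearMap.id := by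
  set c : ℝ := Real.cos (α * Real.pi) with hc
  have hpi : (0:ℝ) < Real.pi := Real.pi_pos
  -- c < 1
  have hclt : c < 1 := by
    rcases lt_or_eq_of_le (Real.cos_le_one (α * Real.pi)) with h | h
    · exact h
    · exfalso
      have h0 : α * Real.pi ≠ 0 := by positivity
      have := (Real.cos_eq_one_iff_of_lt_of_lt
        (by nlinarith : -(2 * Real.pi) < α * Real.pi)
        (by nlinarith : α * Real.pi < 2 * Real.pi)).mp h
      exact h0 this
  -- -1 < c
  have hcgt : -1 < c := by
    rcases lt_or_eq_of_le (Real.neg_one_le_cos (α * Real.pi)) with h | h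
    · exact h
    · exfalso
      obtain ⟨k, hk⟩ := Real.cos_eq_neg_one_iff.mp h.symm
      have hα : α = 1 + 2 * (k : ℝ) := by
        have := mul_right_cancel₀ (ne_of_gt hpi) (by linarith [hk] : (1 + 2 * (k:ℝ)) * Real.pi = α * Real.pi)
        linarith [this]
      have h1' : (-1:ℝ) < 2 * (k:ℝ) := by linarith
      have h2' : (2:ℝ) * (k:ℝ) < 1 := by
        rcases lt_or_eq_of_le (by linarith : 2 * (k:ℝ) ≤ 1) with h' | h'
        · exact h'
        · exact absurd (show α = 2 by linarith) (ne_of_lt hα2)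
      have hk1 : (-1:ℤ) < 2 * k := by exact_mod_cast h1'
      have hk2 : (2:ℤ) * k < 1 := by exact_mod_cast h2'
      have : k = 0 := by omega
      exact hα1 (by rw [hα, this]; norm_num)
  -- M > 0
  have hM0 : M ≠ 0 := by
    rcases eq_or_ne Mm 0 with hm | hm
    · have hp : Mp ≠ 0 := fun hp => hM ⟨hm, hp⟩
      have : M = Mp ^ 2 := by rw [hMdef, hm]; ring
      rw [this]; positivity
    · have : 0 < M := by
        nlinarith [sq_nonneg (Mp + Mm * c), mul_pos (mul_self_pos.mpr hm) (by nlinarith : 0 < 1 - c ^ 2)]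
      exact ne_of_gt this
  -- pointwise identities
  have eImDm : ∀ v : V, Im (Dm v) = v := fun v => by
    have := congrArg (fun f => f v) hc2.symm
    simpa using (this.trans (congrArg (fun f => f v) h1))
  have eIpDp : ∀ v : V, Ip (Dp v) = v := fun v => by
    have := congrArg (fun f => f v) hc5.symm
    simpa using (this.trans (congrArg (fun f => f v) h2))
  have ecross : ∀ v : V, Ip (Dm v) + Im (Dp v) = (2 * c) • v := fun v => by
    have h3v := congrArg (fun f => f v) h3
    have h3c : Dm (Ip v) = Ip (Dm v) := congrArg (fun f => f v) hc3
    have h4c : Dp (Im v) = Im (Dp v) := congrArg (fun f => f v) hc4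
    simp only [LinearMap.add_apply, LinearMap.comp_apply, LinearMap.smul_apply,
      LinearMap.id_apply] at h3v
    rw [h3c, h4c] at h3v
    exact h3v
  constructor
  · ext v
    simp only [LinearMap.comp_apply, LinearMap.add_apply, LinearMap.smul_apply, map_add,
      map_smul, LinearMap.id_apply, eImDm, eIpDp]
    have hx : Ip (Dm v) = (2 * c) • v - Im (Dp v) := by
      have := ecross v; linear_combination (norm := module) this
    rw [hx]
    have hKmMp : Km * Mp = Kp * Mm := by rw [hKm, hKp]; field_simp
    have hcoef : Km * Mm + Kp * Mp + Kp * Mm * (2 * c) = 1 := by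
      rw [hKm, hKp]; field_simp; rw [hMdef]; ring
    match_scalars
    · linear_combination hcoef
    · linear_combination hKmMp
  · ext v
    have e1 : Dm (Im v) = v := congrArg (fun f => f v) h1
    have e2 : Dp (Ip v) = v := congrArg (fun f => f v) h2
    have e3 : Dm (Ip v) + Dp (Im v) = (2 * c) • v := by
      have h3v := congrArg (fun f => f v) h3
      simpa using h3v
    simp only [LinearMap.comp_apply, LinearMap.add_apply, LinearMap.smul_apply, map_add,
      map_smul, LinearMap.id_apply, e1, e2]
    have hx : Dm (Ip v) = (2 * c) • v - Dp (Im v) := by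
      linear_combination (norm := module) e3
    rw [hx]
    have hKmMp : Mm * Kp = Mp * Km := by rw [hKm, hKp]; field_simp
    have hcoef : Mm * Km + Mp * Kp + Mp * Km * (2 * c) = 1 := by
      rw [hKm, hKp]; field_simp; rw [hMdef]; ring
    match_scalars
    · linear_combination hcoef + 2 * c * hKmMp
    · linear_combination -hKmMp
end
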